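/- Let p_1 < p_2 < ... < p_r be primes with r ≥ 2 and suppose p_1 ≥ r. Then 2·φ(p_1·p_2⋯p_{r-1}) ≥ p_1·p_2⋯p_{r-1}, with equality if and only if r = 2 and p_1 = 2. -/

import Mathlib

open Finset

lemma lemA (q : ℕ → ℕ) (a : ℕ) (ha : 1 ≤ a) :
    ∀ k, (∀ i < k, a + i ≤ q i) →
      (a - 1) * ∏ i ∈ range k, q i ≤ (a + k - 1) * ∏ i ∈ range k, (q i - 1) := by
  intro k
  induction k with
  | zero => simp
  | succ k ih =>
    intro h
    have h1 := ih (fun i hi => h i (Nat.lt_succ_of_lt hi))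
    have hqk : a + k ≤ q k := h k (Nat.lt_succ_self k)
    rw [prod_range_succ, prod_range_succ]
    have key : (a + k - 1) * q k ≤ (a + k) * (q k - 1) := by
      obtain ⟨m, hm⟩ : ∃ m, q k = m + 1 := ⟨q k - 1, by omega⟩
      obtain ⟨b, hb⟩ : ∃ b, a + k = b + 1 := ⟨a + k - 1, by omega⟩
      rw [hm, hb]
      simp only [Nat.add_sub_cancel]
      nlinarith [show b ≤ m by omega]
    calc (a - 1) * ((∏ i ∈ range k, q i) * q k)
        = ((a - 1) * ∏ i ∈ range k, q i) * q k := by ring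
      _ ≤ ((a + k - 1) * ∏ i ∈ range k, (q i - 1)) * q k := by
          exact Nat.mul_le_mul_right _ h1
      _ = (∏ i ∈ range k, (q i - 1)) * ((a + k - 1) * q k) := by ring
      _ ≤ (∏ i ∈ range k, (q i - 1)) * ((a + k) * (q k - 1)) := Nat.mul_le_mul_left _ key
      _ = (a + (k + 1) - 1) * ((∏ i ∈ range k, (q i - 1)) * (q k - 1)) := by
          have : a + (k + 1) - 1 = a + k := by omega
          rw [this]; ring

lemma lemStrict (q : ℕ → ℕ) (r m : ℕ) (hr : 3 ≤ r)
    (h0 : r ≤ q 0)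
    (hb : ∀ i < m, r + 2 + i ≤ q (i + 1))
    (hm : m = r - 2) :
    ∏ i ∈ range (m + 1), q i < 2 * ∏ i ∈ range (m + 1), (q i - 1) := by
  rw [prod_range_succ', prod_range_succ']
  set A := ∏ i ∈ range m, q (i + 1) with hA
  set B := ∏ i ∈ range m, (q (i + 1) - 1) with hB
  have h1 := lemA (fun i => q (i + 1)) (r + 2) (by omega) m hb
  have hrw : r + 2 + m - 1 = 2 * r - 1 := by omega
  rw [hrw] at h1
  have hBpos : 1 ≤ B := by
    rw [hB]
    refine one_le_prod' fun i hi => ?_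
    have := hb i (mem_range.mp hi)
    omega
  have hApos : 1 ≤ A := by
    rw [hA]
    refine one_le_prod' fun i hi => ?_
    have := hb i (mem_range.mp hi)
    omega
  obtain ⟨s, rfl⟩ : ∃ s, r = s + 3 := ⟨r - 3, by omega⟩
  obtain ⟨c, hc⟩ : ∃ c, q 0 = c + 1 := ⟨q 0 - 1, by omega⟩
  have hcge : s + 2 ≤ c := by omega
  rw [hc]
  simp only [Nat.add_sub_cancel]
  have h1' : (s + 4) * A ≤ (2 * s + 5) * B := by
    have : 2 * (s + 3) - 1 = 2 * s + 5 := by omega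
    rw [this] at h1
    have : s + 3 + 2 - 1 = s + 4 := by omega
    rw [this] at h1
    exact h1
  nlinarith [Nat.mul_le_mul h1' (show (s + 2) * (c + 1) ≤ (s + 3) * c by nlinarith),
    Nat.mul_le_mul hBpos hcge]

theorem stmt_0 (r : ℕ) (hr : 2 ≤ r) (p : ℕ → ℕ)
    (hp : ∀ i < r, (p i).Prime)
    (hmono : ∀ i j, i < j → j < r → p i < p j)
    (hge : r ≤ p 0) :
    2 * Nat.totient (∏ i ∈ Finset.range (r - 1), p i) ≥
      ∏ i ∈ Finset.range (r - 1), p i ∧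
    (2 * Nat.totient (∏ i ∈ Finset.range (r - 1), p i) =
      ∏ i ∈ Finset.range (r - 1), p i ↔ r = 2 ∧ p 0 = 2) := by
  have hgap : ∀ d i, i + d < r → p i + d ≤ p (i + d) := by
    intro d
    induction d with
    | zero => intro i h; simp
    | succ d ih =>
      intro i h
      have h1 := ih i (by omega)
      have h2 := hmono (i + d) (i + (d + 1)) (by omega) h
      omega
  have htot : ∀ k ≤ r, Nat.totient (∏ i ∈ range k, p i) =
      ∏ i ∈ range k, (p i - 1) := by
    intro k
    induction k with
    | zero => simp
    | succ k ih =>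
      intro hk
      rw [prod_range_succ, prod_range_succ,
        Nat.totient_mul, ih (by omega), Nat.totient_prime (hp k (by omega))]
      refine Nat.Coprime.prod_left fun i hi => ?_
      have hik : i < k := mem_range.mp hi
      exact (Nat.coprime_primes (hp i (by omega)) (hp k (by omega))).mpr
        (Nat.ne_of_lt (hmono i k hik (by omega)))
  have htoteq := htot (r - 1) (by omega)
  have hb : ∀ i < r - 1, r + i ≤ p i := by
    intro i hi
    have h := hgap i 0 (by omega)
    simp only [Nat.zero_add] at h
    omega
  have hmain : ∏ i ∈ range (r - 1), p i ≤ 2 * ∏ i ∈ range (r - 1), (p i - 1) := by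
    have h1 := lemA p r (by omega) (r - 1) hb
    have hrw : r + (r - 1) - 1 = (r - 1) * 2 := by omega
    rw [hrw] at h1
    have h2 : (r - 1) * (∏ i ∈ range (r - 1), p i) ≤
        (r - 1) * (2 * ∏ i ∈ range (r - 1), (p i - 1)) := by
      calc (r - 1) * (∏ i ∈ range (r - 1), p i)
          ≤ (r - 1) * 2 * ∏ i ∈ range (r - 1), (p i - 1) := h1
        _ = (r - 1) * (2 * ∏ i ∈ range (r - 1), (p i - 1)) := by ring
    exact Nat.le_of_mul_le_mul_left h2 (by omega)
  constructor
  · rw [htoteq]; exact hmain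
  constructor
  · intro heq
    by_cases hr2 : r = 2
    · refine ⟨hr2, ?_⟩
      subst hr2
      simp only [show (2 : ℕ) - 1 = 1 from rfl, prod_range_one] at heq
      rw [Nat.totient_prime (hp 0 (by omega))] at heq
      have := (hp 0 (by omega)).two_le
      omega
    · exfalso
      have hr3 : 3 ≤ r := by omega
      have hp1b : r + 2 ≤ p 1 := by
        have hp0 := hp 0 (by omega)
        have hp1 := hp 1 (by omega)
        have h01 : p 0 < p 1 := hmono 0 1 one_pos (by omega)
        by_contra h
        have hp1v : p 1 = r + 1 := by omega
        have hp0v : p 0 = r := by omega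
        have hrprime : r.Prime := hp0v ▸ hp0
        have hodd : Odd r := hrprime.odd_of_ne_two (by omega)
        have h2dvd : 2 ∣ p 1 := by obtain ⟨m, hm⟩ := hodd; omega
        have := hp1.eq_one_or_self_of_dvd 2 h2dvd
        omega
      have hb2 : ∀ i < r - 2, r + 2 + i ≤ p (i + 1) := by
        intro i hi
        have h := hgap i 1 (by omega)
        have : 1 + i = i + 1 := by omega
        rw [this] at h
        omega
      have hstrict := lemStrict p r (r - 2) hr3 hge hb2 rfl
      have hrw : r - 2 + 1 = r - 1 := by omega
      rw [hrw] at hstrict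
      rw [htoteq] at heq
      omega
  · rintro ⟨hr2, hp02⟩
    subst hr2
    simp only [show (2 : ℕ) - 1 = 1 from rfl, prod_range_one, hp02]
    decide
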